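/- Suppose the CutWidth W satisfies W ≥ Δ. If a bag A satisfies (n − |A|)·Δ < W, then γ(A) = W. -/

import Mathlib

open Finset

variable {V : Type*} [Fintype V] [DecidableEq V]

/-- The cut of a bag `A`: the number of edges of `G` with exactly one endpoint in `A`. -/
def cut (G : SimpleGraph V) [DecidableRel G.Adj] (A : Finset V) : ℕ :=
  ((A ×ˢ Aᶜ).filter fun p => G.Adj p.1 p.2).card

/-- An `(A–B)`-crusade of length `k+1`: a sequence of bags starting at `A`, ending at `B`,
removing at most one node at each step. -/
def IsCrusade (A B : Finset V) (k : ℕ) (ω : ℕ → Finset V) : Prop :=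
  ω 0 = A ∧ ω k = B ∧ ∀ i < k, (ω i \ ω (i + 1)).card ≤ 1

/-- The width of a crusade: the maximum cut encountered after the first bag. -/
def width (G : SimpleGraph V) [DecidableRel G.Adj] (k : ℕ) (ω : ℕ → Finset V) : ℕ :=
  (Finset.Icc 1 k).sup fun i => cut G (ω i)

/-- The resilience of a bag `A`: the minimum width over all `(A–∅)`-crusades. -/
noncomputable def resilience (G : SimpleGraph V) [DecidableRel G.Adj] (A : Finset V) : ℕ :=
  sInf {w | ∃ (k : ℕ) (ω : ℕ → Finset V), IsCrusade A ∅ k ω ∧ width G k ω = w}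

/-- A crusade is monotone if each bag contains the next. -/
def IsMonotone (k : ℕ) (ω : ℕ → Finset V) : Prop :=
  ∀ i < k, ω (i + 1) ⊆ ω i

/-- The CutWidth of `G`: the minimum width over all monotone `(V–∅)`-crusades. -/
noncomputable def cutWidth (G : SimpleGraph V) [DecidableRel G.Adj] : ℕ :=
  sInf {w | ∃ (k : ℕ) (ω : ℕ → Finset V),
    IsCrusade Finset.univ ∅ k ω ∧ IsMonotone k ω ∧ width G k ω = w}

section Helpers

variable (G : SimpleGraph V) [DecidableRel G.Adj]

lemma cut_eq_sum (S : Finset V) :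
    cut G S = ∑ p : V × V, (if p.1 ∈ S ∧ p.2 ∉ S ∧ G.Adj p.1 p.2 then 1 else 0) := by
  have h : (S ×ˢ Sᶜ).filter (fun p => G.Adj p.1 p.2)
      = univ.filter (fun p : V × V => p.1 ∈ S ∧ p.2 ∉ S ∧ G.Adj p.1 p.2) := by
    ext p
    simp [Finset.mem_product, and_assoc]
  rw [cut, h, Finset.card_filter]

lemma cut_univ : cut G univ = 0 := by
  simp [cut]

lemma cut_submodular (X Y : Finset V) :
    cut G (X ∩ Y) + cut G (X ∪ Y) ≤ cut G X + cut G Y := by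
  rw [cut_eq_sum, cut_eq_sum, cut_eq_sum, cut_eq_sum, ← Finset.sum_add_distrib,
    ← Finset.sum_add_distrib]
  apply Finset.sum_le_sum
  intro p _
  by_cases h1 : p.1 ∈ X <;> by_cases h2 : p.1 ∈ Y <;> by_cases h3 : p.2 ∈ X <;>
    by_cases h4 : p.2 ∈ Y <;> by_cases h5 : G.Adj p.1 p.2 <;>
    simp [h1, h2, h3, h4, h5, Finset.mem_inter, Finset.mem_union]

lemma cut_le_compl (S : Finset V) : cut G S ≤ Sᶜ.card * G.maxDegree := by
  rw [cut]
  rw [Finset.card_eq_sum_card_fiberwise (f := Prod.snd) (t := Sᶜ)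
    (fun p hp => by simp only [Finset.mem_coe, Finset.mem_filter, Finset.mem_product] at hp; exact hp.1.2)]
  calc ∑ b ∈ Sᶜ, (((S ×ˢ Sᶜ).filter fun p => G.Adj p.1 p.2).filter fun p => p.2 = b).card
      ≤ ∑ b ∈ Sᶜ, G.maxDegree := by
        apply Finset.sum_le_sum
        intro b _
        refine le_trans ?_ (G.degree_le_maxDegree b)
        rw [← SimpleGraph.card_neighborFinset_eq_degree]
        apply Finset.card_le_card_of_injOn Prod.fst
        · intro p hp
          simp only [Finset.mem_coe, Finset.mem_filter, Finset.mem_product] at hp ⊢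
          rw [SimpleGraph.mem_neighborFinset]
          exact (hp.2 ▸ hp.1.2).symm
        · intro p hp q hq hpq
          simp only [Finset.mem_coe, Finset.mem_filter] at hp hq
          exact Prod.ext hpq (hp.2.trans hq.2.symm)
    _ = Sᶜ.card * G.maxDegree := by rw [Finset.sum_const, smul_eq_mul]

lemma sum_comp_update (s : Finset ℕ) (f : Finset V → ℕ) (ω : ℕ → Finset V) (i : ℕ)
    (b : Finset V) (h : i ∈ s) :
    ∑ j ∈ s, f (Function.update ω i b j) = f b + ∑ j ∈ s.erase i, f (ω j) := by
  have h1 : (fun j => f (Function.update ω i b j))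
      = Function.update (fun j => f (ω j)) i (f b) :=
    funext fun j => Function.apply_update (fun _ t => f t) ω i b j
  rw [h1, Finset.sum_update_of_mem h, Finset.sdiff_singleton_eq_erase]

/-- The termination measure for the monotonization procedure. -/
def crusadeMeasure (k : ℕ) (ω : ℕ → Finset V) : ℕ :=
  (∑ i ∈ Finset.Icc 1 k, cut G (ω i)) * ((k + 1) * Fintype.card V + 1)
    + ∑ i ∈ Finset.Icc 0 k, (ω i).card

lemma exists_monotone_of_crusade (k : ℕ) :
    ∀ N (ω : ℕ → Finset V), crusadeMeasure G k ω ≤ N → IsCrusade univ ∅ k ω →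
    ∃ ω', IsCrusade univ ∅ k ω' ∧ IsMonotone k ω' ∧ width G k ω' ≤ width G k ω := by
  intro N
  induction N using Nat.strong_induction_on with
  | _ N ih =>
    intro ω hm hc
    obtain ⟨h0, hk, hstep⟩ := hc
    by_cases hmono : ∀ i < k, ω (i + 1) ⊆ ω i
    · exact ⟨ω, ⟨h0, hk, hstep⟩, hmono, le_rfl⟩
    push_neg at hmono
    obtain ⟨i, hik, hsub⟩ := hmono
    have hi1 : 1 ≤ i := by
      rcases Nat.eq_zero_or_pos i with h | h
      · exfalso; apply hsub; subst h; rw [h0]; exact Finset.subset_univ _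
      · exact h
    have hik' : i + 1 < k := by
      rcases Nat.lt_or_ge (i + 1) k with h | h
      · exact h
      · exfalso
        have hik1 : i + 1 = k := by omega
        apply hsub
        rw [hik1, hk]
        exact Finset.empty_subset _
    obtain ⟨x, hx1, hx2⟩ := Finset.not_subset.mp hsub
    have hMv : ∀ τ : ℕ → Finset V,
        ∑ j ∈ Finset.Icc 0 k, (τ j).card ≤ (k + 1) * Fintype.card V := by
      intro τ
      calc ∑ j ∈ Finset.Icc 0 k, (τ j).card
          ≤ ∑ j ∈ Finset.Icc 0 k, Fintype.card V :=
            Finset.sum_le_sum fun j _ => Finset.card_le_univ _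
        _ = (k + 1) * Fintype.card V := by
            rw [Finset.sum_const, smul_eq_mul, Nat.card_Icc, Nat.sub_zero]
    by_cases hcase : cut G (ω i ∪ ω (i + 1)) < cut G (ω i)
    · -- replace ω i by the union
      set u := ω i ∪ ω (i + 1) with hu
      set ω' := Function.update ω i u with hω'
      have hne0 : ω' 0 = univ := by
        rw [hω', Function.update_of_ne (by omega), h0]
      have hnek : ω' k = ∅ := by
        rw [hω', Function.update_of_ne (by omega), hk]
      have hstep' : ∀ j < k, (ω' j \ ω' (j + 1)).card ≤ 1 := by
        intro j hj
        rcases eq_or_ne j i with rfl | hji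
        · rw [hω', Function.update_self, Function.update_of_ne (by omega)]
          have hEq : u \ ω (j + 1) = ω j \ ω (j + 1) := by
            ext y; rw [hu]; simp only [Finset.mem_sdiff, Finset.mem_union]; tauto
          rw [hEq]; exact hstep j hj
        · rcases eq_or_ne (j + 1) i with hji1 | hji1
          · rw [hω', Function.update_of_ne hji, hji1, Function.update_self]
            have h1 : ω j \ u ⊆ ω j \ ω i :=
              Finset.sdiff_subset_sdiff (le_refl _) Finset.subset_union_left
            refine le_trans (Finset.card_le_card h1) ?_
            rw [← hji1]; exact hstep j hj
          · rw [hω', Function.update_of_ne hji, Function.update_of_ne hji1]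
            exact hstep j hj
      have hwle : width G k ω' ≤ width G k ω := by
        apply Finset.sup_le
        intro j hj
        rcases eq_or_ne j i with rfl | hji
        · rw [hω', Function.update_self]
          exact le_trans (le_of_lt hcase) (Finset.le_sup (f := fun l => cut G (ω l)) hj)
        · rw [hω', Function.update_of_ne hji]
          exact Finset.le_sup (f := fun l => cut G (ω l)) hj
      have hiIcc : i ∈ Finset.Icc 1 k := by rw [Finset.mem_Icc]; omega
      have hSc : (∑ j ∈ Finset.Icc 1 k, cut G (ω' j)) + 1
          ≤ ∑ j ∈ Finset.Icc 1 k, cut G (ω j) := by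
        rw [hω', sum_comp_update _ (fun t => cut G t) ω _ u hiIcc,
          ← Finset.add_sum_erase _ (fun j => cut G (ω j)) hiIcc]
        omega
      have hmeas : crusadeMeasure G k ω' < crusadeMeasure G k ω := by
        unfold crusadeMeasure
        calc (∑ j ∈ Finset.Icc 1 k, cut G (ω' j)) * ((k + 1) * Fintype.card V + 1)
              + ∑ j ∈ Finset.Icc 0 k, (ω' j).card
            < (∑ j ∈ Finset.Icc 1 k, cut G (ω' j)) * ((k + 1) * Fintype.card V + 1)
              + ((k + 1) * Fintype.card V + 1) :=
              Nat.add_lt_add_left (Nat.lt_succ_of_le (hMv ω')) _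
          _ = ((∑ j ∈ Finset.Icc 1 k, cut G (ω' j)) + 1) * ((k + 1) * Fintype.card V + 1) := by
              ring
          _ ≤ (∑ j ∈ Finset.Icc 1 k, cut G (ω j)) * ((k + 1) * Fintype.card V + 1) :=
              Nat.mul_le_mul_right _ hSc
          _ ≤ _ := Nat.le_add_right _ _
      obtain ⟨ω'', hc'', hm'', hw''⟩ := ih (crusadeMeasure G k ω') (lt_of_lt_of_le hmeas hm)
        ω' le_rfl ⟨hne0, hnek, hstep'⟩
      exact ⟨ω'', hc'', hm'', le_trans hw'' hwle⟩
    · -- replace ω (i+1) by the intersection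
      push_neg at hcase
      have hsubmod := cut_submodular G (ω i) (ω (i + 1))
      have hcutle : cut G (ω i ∩ ω (i + 1)) ≤ cut G (ω (i + 1)) := by omega
      set u := ω i ∩ ω (i + 1) with hu
      set ω' := Function.update ω (i + 1) u with hω'
      have hne0 : ω' 0 = univ := by
        rw [hω', Function.update_of_ne (by omega), h0]
      have hnek : ω' k = ∅ := by
        rw [hω', Function.update_of_ne (by omega), hk]
      have hstep' : ∀ j < k, (ω' j \ ω' (j + 1)).card ≤ 1 := by
        intro j hj
        rcases eq_or_ne (j + 1) (i + 1) with hji1 | hji1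
        · have hji : j = i := by omega
          rw [hω', Function.update_of_ne (by omega : j ≠ i + 1), hji1, Function.update_self]
          have hEq : ω j \ u = ω j \ ω (j + 1) := by
            ext y; rw [hu, hji]
            simp only [Finset.mem_sdiff, Finset.mem_inter]
            tauto
          rw [hEq]; exact hstep j hj
        · rcases eq_or_ne j (i + 1) with rfl | hji
          · rw [hω', Function.update_self, Function.update_of_ne hji1]
            have h1 : u \ ω (i + 1 + 1) ⊆ ω (i + 1) \ ω (i + 1 + 1) :=
              Finset.sdiff_subset_sdiff Finset.inter_subset_right (le_refl _)
            exact le_trans (Finset.card_le_card h1) (hstep (i + 1) hj)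
          · rw [hω', Function.update_of_ne hji, Function.update_of_ne hji1]
            exact hstep j hj
      have hwle : width G k ω' ≤ width G k ω := by
        apply Finset.sup_le
        intro j hj
        rcases eq_or_ne j (i + 1) with rfl | hji
        · rw [hω', Function.update_self]
          exact le_trans hcutle (Finset.le_sup (f := fun l => cut G (ω l)) hj)
        · rw [hω', Function.update_of_ne hji]
          exact Finset.le_sup (f := fun l => cut G (ω l)) hj
      have hiIcc : i + 1 ∈ Finset.Icc 1 k := by rw [Finset.mem_Icc]; omega
      have hiIcc0 : i + 1 ∈ Finset.Icc 0 k := by rw [Finset.mem_Icc]; omega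
      have hSc : ∑ j ∈ Finset.Icc 1 k, cut G (ω' j) ≤ ∑ j ∈ Finset.Icc 1 k, cut G (ω j) := by
        rw [hω', sum_comp_update _ (fun t => cut G t) ω _ u hiIcc,
          ← Finset.add_sum_erase _ (fun j => cut G (ω j)) hiIcc]
        omega
      have hSv : (∑ j ∈ Finset.Icc 0 k, (ω' j).card) < ∑ j ∈ Finset.Icc 0 k, (ω j).card := by
        rw [hω', sum_comp_update _ (fun t => t.card) ω _ u hiIcc0,
          ← Finset.add_sum_erase _ (fun j => (ω j).card) hiIcc0]
        have hlt : u.card < (ω (i + 1)).card := by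
          apply Finset.card_lt_card
          constructor
          · exact Finset.inter_subset_right
          · intro hcontra
            exact hx2 (Finset.mem_inter.mp (hcontra hx1)).1
        omega
      have hmeas : crusadeMeasure G k ω' < crusadeMeasure G k ω := by
        unfold crusadeMeasure
        exact Nat.add_lt_add_of_le_of_lt (Nat.mul_le_mul_right _ hSc) hSv
      obtain ⟨ω'', hc'', hm'', hw''⟩ := ih (crusadeMeasure G k ω') (lt_of_lt_of_le hmeas hm)
        ω' le_rfl ⟨hne0, hnek, hstep'⟩
      exact ⟨ω'', hc'', hm'', le_trans hw'' hwle⟩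

/-- A monotone descent crusade from `B` to `A ⊆ B` staying between `A` and `B`. -/
lemma exists_descent_aux (A : Finset V) : ∀ (n : ℕ) (B : Finset V), (B \ A).card = n →
    A ⊆ B → ∃ (m : ℕ) (σ : ℕ → Finset V), IsCrusade B A m σ ∧ IsMonotone m σ ∧
      ∀ j ≤ m, A ⊆ σ j ∧ σ j ⊆ B := by
  intro n
  induction n using Nat.strong_induction_on with
  | _ n ih =>
    intro B hn hAB
    rcases Nat.eq_zero_or_pos n with h0 | hpos
    · have hBA : B = A := by
        subst h0
        have hemp := Finset.card_eq_zero.mp hn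
        have h2 : B ⊆ A := by
          intro y hy
          by_contra hy2
          exact absurd hemp (Finset.nonempty_iff_ne_empty.mp ⟨y, Finset.mem_sdiff.mpr ⟨hy, hy2⟩⟩)
        exact le_antisymm h2 hAB
      exact ⟨0, fun _ => A, ⟨hBA.symm, rfl, fun i hi => by omega⟩, fun i hi => by omega,
        fun j hj => ⟨subset_rfl, hBA ▸ subset_rfl⟩⟩
    · obtain ⟨x, hx⟩ := Finset.card_pos.mp (hn ▸ hpos)
      rw [Finset.mem_sdiff] at hx
      have hsubE : A ⊆ B.erase x := fun y hy =>
        Finset.mem_erase.mpr ⟨fun h => hx.2 (h ▸ hy), hAB hy⟩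
      have hcard : ((B.erase x) \ A).card < n := by
        rw [← hn]
        apply Finset.card_lt_card
        constructor
        · exact Finset.sdiff_subset_sdiff (Finset.erase_subset _ _) (le_refl _)
        · intro hcon
          have := hcon (Finset.mem_sdiff.mpr hx)
          rw [Finset.mem_sdiff, Finset.mem_erase] at this
          exact this.1.1 rfl
      obtain ⟨m, σ, ⟨hσ0, hσm, hσs⟩, hσmono, hσcont⟩ := ih _ hcard (B.erase x) rfl hsubE
      refine ⟨m + 1, fun j => if j = 0 then B else σ (j - 1), ⟨by simp, ?_, ?_⟩, ?_, ?_⟩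
      · show (if m + 1 = 0 then B else σ (m + 1 - 1)) = A
        rw [if_neg (show ¬(m + 1 = 0) by omega), Nat.add_sub_cancel, hσm]
      · intro j hj
        show ((if j = 0 then B else σ (j - 1)) \ (if j + 1 = 0 then B else σ (j + 1 - 1))).card ≤ 1
        rw [if_neg (show ¬(j + 1 = 0) by omega)]
        rcases Nat.eq_zero_or_pos j with rfl | hj0
        · rw [if_pos rfl, show (0 : ℕ) + 1 - 1 = 0 from rfl]
          have hsub1 : B \ σ 0 ⊆ {x} := by
            intro y hy
            rw [Finset.mem_sdiff, hσ0] at hy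
            rw [Finset.mem_singleton]
            by_contra hne
            exact hy.2 (Finset.mem_erase.mpr ⟨hne, hy.1⟩)
          exact le_trans (Finset.card_le_card hsub1) (by simp)
        · rw [if_neg (show ¬(j = 0) by omega), show j + 1 - 1 = (j - 1) + 1 by omega]
          exact hσs (j - 1) (by omega)
      · intro j hj
        show (if j + 1 = 0 then B else σ (j + 1 - 1)) ⊆ (if j = 0 then B else σ (j - 1))
        rw [if_neg (show ¬(j + 1 = 0) by omega)]
        rcases Nat.eq_zero_or_pos j with rfl | hj0
        · rw [if_pos rfl, show (0 : ℕ) + 1 - 1 = 0 from rfl, hσ0]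
          exact Finset.erase_subset _ _
        · rw [if_neg (show ¬(j = 0) by omega), show j + 1 - 1 = (j - 1) + 1 by omega]
          exact hσmono (j - 1) (by omega)
      · intro j hj
        show A ⊆ (if j = 0 then B else σ (j - 1)) ∧ (if j = 0 then B else σ (j - 1)) ⊆ B
        rcases Nat.eq_zero_or_pos j with rfl | hj0
        · rw [if_pos rfl]
          exact ⟨hAB, subset_rfl⟩
        · rw [if_neg (show ¬(j = 0) by omega)]
          obtain ⟨h1, h2⟩ := hσcont (j - 1) (by omega)
          exact ⟨h1, le_trans h2 (Finset.erase_subset _ _)⟩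

lemma exists_descent (A B : Finset V) (hAB : A ⊆ B) :
    ∃ (m : ℕ) (σ : ℕ → Finset V), IsCrusade B A m σ ∧ IsMonotone m σ ∧
      ∀ j ≤ m, A ⊆ σ j ∧ σ j ⊆ B :=
  exists_descent_aux A _ B rfl hAB

lemma cutWidth_set_nonempty :
    {w | ∃ (k : ℕ) (ω : ℕ → Finset V),
      IsCrusade (univ : Finset V) ∅ k ω ∧ IsMonotone k ω ∧ width G k ω = w}.Nonempty := by
  obtain ⟨m, σ, hc, hm, _⟩ := exists_descent (∅ : Finset V) univ (Finset.empty_subset _)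
  exact ⟨width G m σ, m, σ, hc, hm, rfl⟩

lemma cutWidth_le (k : ℕ) (ω : ℕ → Finset V) (hc : IsCrusade univ ∅ k ω) :
    cutWidth G ≤ width G k ω := by
  obtain ⟨ω', hc', hm', hw'⟩ := exists_monotone_of_crusade G k (crusadeMeasure G k ω) ω le_rfl hc
  exact le_trans (Nat.sInf_le ⟨k, ω', hc', hm', rfl⟩) hw'

/-- Prepending `A` to a `univ → ∅` crusade. -/
lemma prepend_crusade (A : Finset V) (k : ℕ) (τ : ℕ → Finset V)
    (hcr : IsCrusade univ ∅ k τ) :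
    IsCrusade A ∅ (k + 1) (fun j => if j = 0 then A else τ (j - 1)) := by
  refine ⟨by simp, ?_, ?_⟩
  · show (if k + 1 = 0 then A else τ (k + 1 - 1)) = ∅
    rw [if_neg (show ¬(k + 1 = 0) by omega), Nat.add_sub_cancel, hcr.2.1]
  · intro j hj
    show ((if j = 0 then A else τ (j - 1)) \ (if j + 1 = 0 then A else τ (j + 1 - 1))).card ≤ 1
    rw [if_neg (show ¬(j + 1 = 0) by omega)]
    rcases Nat.eq_zero_or_pos j with rfl | hj0
    · rw [if_pos rfl, show (0 : ℕ) + 1 - 1 = 0 from rfl, hcr.1,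
        Finset.sdiff_eq_empty_iff_subset.mpr (Finset.subset_univ A), Finset.card_empty]
      omega
    · rw [if_neg (show ¬(j = 0) by omega), show j + 1 - 1 = (j - 1) + 1 by omega]
      exact hcr.2.2 (j - 1) (by omega)

lemma resilience_le_cutWidth (A : Finset V) : resilience G A ≤ cutWidth G := by
  obtain ⟨k, τ, hcr, hmono, hwidth⟩ := Nat.sInf_mem (cutWidth_set_nonempty G)
  have hwidth' : width G k τ = cutWidth G := hwidth
  have hcr' := prepend_crusade A k τ hcr
  have hwle : width G (k + 1) (fun j => if j = 0 then A else τ (j - 1)) ≤ cutWidth G := by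
    apply Finset.sup_le
    intro j hj
    rw [Finset.mem_Icc] at hj
    show cut G (if j = 0 then A else τ (j - 1)) ≤ cutWidth G
    rw [if_neg (show ¬(j = 0) by omega)]
    rcases Nat.eq_zero_or_pos (j - 1) with h10 | h10
    · rw [h10, hcr.1, cut_univ]
      exact Nat.zero_le _
    · have hmem : j - 1 ∈ Finset.Icc 1 k := Finset.mem_Icc.mpr ⟨by omega, by omega⟩
      exact le_trans (Finset.le_sup (f := fun l => cut G (τ l)) hmem) (le_of_eq hwidth')
  exact le_trans (Nat.sInf_le ⟨k + 1, _, hcr', rfl⟩) hwle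

lemma resilience_set_nonempty (A : Finset V) :
    {w | ∃ (k : ℕ) (ω : ℕ → Finset V), IsCrusade A ∅ k ω ∧ width G k ω = w}.Nonempty := by
  obtain ⟨k, τ, hcr, hmono, hwidth⟩ := Nat.sInf_mem (cutWidth_set_nonempty G)
  exact ⟨_, k + 1, _, prepend_crusade A k τ hcr, rfl⟩

lemma cutWidth_le_of_crusade (A : Finset V) (k : ℕ) (ω : ℕ → Finset V)
    (hc : IsCrusade A ∅ k ω) :
    cutWidth G ≤ max (Aᶜ.card * G.maxDegree) (width G k ω) := by
  obtain ⟨h0, hk, hstep⟩ := hc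
  obtain ⟨m, σ, ⟨hσ0, hσm, hσs⟩, hσmono, hσcont⟩ :=
    exists_descent A univ (Finset.subset_univ A)
  have hτc : IsCrusade univ ∅ (m + k) (fun j => if j ≤ m then σ j else ω (j - m)) := by
    refine ⟨by simp [hσ0], ?_, ?_⟩
    · show (if m + k ≤ m then σ (m + k) else ω (m + k - m)) = ∅
      rcases Nat.eq_zero_or_pos k with rfl | hkpos
      · rw [if_pos (by omega : m + 0 ≤ m)]
        have hA0 : A = ∅ := h0.symm.trans hk
        rw [show m + 0 = m from rfl, hσm, hA0]
      · rw [if_neg (show ¬(m + k ≤ m) by omega), Nat.add_sub_cancel_left, hk]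
    · intro j hj
      show ((if j ≤ m then σ j else ω (j - m)) \ (if j + 1 ≤ m then σ (j + 1) else ω (j + 1 - m))).card ≤ 1
      rcases Nat.lt_or_ge j m with hjm | hjm
      · rw [if_pos (by omega : j ≤ m), if_pos (by omega : j + 1 ≤ m)]
        exact hσs j hjm
      · by_cases hjeq : j = m
        · subst hjeq
          rw [if_pos (le_refl j), if_neg (show ¬(j + 1 ≤ j) by omega),
            show j + 1 - j = 1 from by omega, hσm, ← h0]
          exact hstep 0 (by omega)
        · rw [if_neg (show ¬(j ≤ m) by omega), if_neg (show ¬(j + 1 ≤ m) by omega),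
            show j + 1 - m = (j - m) + 1 by omega]
          exact hstep (j - m) (by omega)
  have hwτ : width G (m + k) (fun j => if j ≤ m then σ j else ω (j - m))
      ≤ max (Aᶜ.card * G.maxDegree) (width G k ω) := by
    apply Finset.sup_le
    intro j hj
    rw [Finset.mem_Icc] at hj
    show cut G (if j ≤ m then σ j else ω (j - m)) ≤ _
    rcases le_or_gt j m with hjm | hjm
    · rw [if_pos hjm]
      refine le_trans (cut_le_compl G (σ j)) (le_trans ?_ (le_max_left _ _))
      apply Nat.mul_le_mul_right
      apply Finset.card_le_card
      have hAσ := (hσcont j hjm).1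
      intro y hy
      rw [Finset.mem_compl] at *
      exact fun hcontra => hy (hAσ hcontra)
    · rw [if_neg (show ¬(j ≤ m) by omega)]
      refine le_trans (Finset.le_sup (f := fun l => cut G (ω l))
        (Finset.mem_Icc.mpr ⟨by omega, by omega⟩)) (le_max_right _ _)
  exact le_trans (cutWidth_le G (m + k) _ hτc) hwτ


end Helpers

theorem resilience_eq_cutWidth_of_large (G : SimpleGraph V) [DecidableRel G.Adj]
    (hconn : G.Connected) (hΔ : 0 < G.maxDegree)
    (hW : G.maxDegree ≤ cutWidth G)
    (A : Finset V) (hA : (Fintype.card V - A.card) * G.maxDegree < cutWidth G) :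
    resilience G A = cutWidth G := by
  have hcompl : Aᶜ.card * G.maxDegree < cutWidth G := by
    rwa [Finset.card_compl]
  apply le_antisymm (resilience_le_cutWidth G A)
  apply le_csInf (resilience_set_nonempty G A)
  rintro w ⟨k, ω, hc, rfl⟩
  have hle := cutWidth_le_of_crusade G A k ω hc
  rcases max_cases (Aᶜ.card * G.maxDegree) (width G k ω) with ⟨heq, _⟩ | ⟨heq, _⟩
  · rw [heq] at hle; omega
  · rw [heq] at hle; exact hle
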